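/- Let P > 0, a > 0 and d > 1 be real constants. Let (ℓ_n) and (k_n) be sequences with ℓ_n = ⌈a n^d⌉, k_n ≤ ℓ_n for all n, and k_n/n → c for some constant c > 0. Define θ_n = 2 ℓ_n H₂(k_n/ℓ_n) / (n log(1 + k_n P)). Then θ_n → 2 c (d − 1) as n → ∞. -/

import Mathlib

open Filter

/-- Binary entropy function (natural logarithm); `H2 0 = H2 1 = 0`. -/
noncomputable def H2 (p : ℝ) : ℝ := -p * Real.log p - (1 - p) * Real.log (1 - p)

lemma neg_mul_log_le {t : ℝ} (ht : 0 ≤ t) : -(t * Real.log t) ≤ 1 - t := by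
  rcases ht.eq_or_lt with h | h
  · simp [← h]
  · have h2 := Real.log_le_sub_one_of_pos (show (0:ℝ) < t⁻¹ by positivity)
    rw [Real.log_inv] at h2
    have h3 := mul_le_mul_of_nonneg_left h2 h.le
    calc -(t * Real.log t) = t * (-Real.log t) := by ring
      _ ≤ t * (t⁻¹ - 1) := h3
      _ = 1 - t := by field_simp

/-- If `ℓ n = ⌈a n^d⌉` with `d > 1`, `k n ≤ ℓ n` and `k n / n → c > 0`, then the overhead
factor `θ_n = 2 ℓ_n H₂(k_n/ℓ_n) / (n log(1 + k_n P))` tends to `2 c (d - 1)`. -/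
theorem stmt1 (P a d : ℝ) (hP : 0 < P) (ha : 0 < a) (hd : 1 < d)
    (ℓ : ℕ → ℕ) (k : ℕ → ℝ)
    (hℓ : ∀ n : ℕ, ℓ n = ⌈a * (n : ℝ) ^ d⌉₊)
    (hkℓ : ∀ n : ℕ, k n ≤ (ℓ n : ℝ))
    (c : ℝ) (hc : 0 < c)
    (hkn : Tendsto (fun n : ℕ => k n / (n : ℝ)) atTop (nhds c)) :
    Tendsto (fun n : ℕ =>
        2 * (ℓ n : ℝ) * H2 (k n / (ℓ n : ℝ)) / ((n : ℝ) * Real.log (1 + k n * P)))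
      atTop (nhds (2 * c * (d - 1))) := by
  have hncast : Tendsto (fun n : ℕ => (n : ℝ)) atTop atTop := tendsto_natCast_atTop_atTop
  have hlogn : Tendsto (fun n : ℕ => Real.log n) atTop atTop :=
    Real.tendsto_log_atTop.comp hncast
  have hzero : ∀ (g : ℕ → ℝ) (L : ℝ), Tendsto g atTop (nhds L) →
      Tendsto (fun n => g n / Real.log n) atTop (nhds 0) :=
    fun g L hg => hg.div_atTop hlogn
  -- eventually k n > 0
  have hkpos : ∀ᶠ n : ℕ in atTop, 0 < k n := by
    have h1 := hkn.eventually (eventually_gt_nhds hc)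
    filter_upwards [h1, eventually_gt_atTop 0] with n h1 h2
    have hn : (0:ℝ) < n := by exact_mod_cast h2
    have := mul_pos h1 hn
    rwa [div_mul_cancel₀ _ hn.ne'] at this
  -- basic eventual facts
  have hbasic : ∀ᶠ n : ℕ in atTop, 0 < k n ∧ (1:ℝ) < n ∧ 0 < Real.log n ∧
      0 < (ℓ n : ℝ) := by
    filter_upwards [hkpos, eventually_ge_atTop 2] with n h1 h2
    have hn1 : (1:ℝ) < n := by exact_mod_cast h2
    exact ⟨h1, hn1, Real.log_pos hn1, lt_of_lt_of_le h1 (hkℓ n)⟩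
  -- ℓ n / n^d → a
  have hnd : Tendsto (fun n : ℕ => ((n:ℝ))^d) atTop atTop :=
    (tendsto_rpow_atTop (lt_trans zero_lt_one hd)).comp hncast
  have hld : Tendsto (fun n : ℕ => (ℓ n : ℝ) / (n:ℝ)^d) atTop (nhds a) := by
    apply tendsto_of_tendsto_of_tendsto_of_le_of_le' (tendsto_const_nhds (x := a))
      (by simpa using (tendsto_const_nhds (x := a)).add hnd.inv_tendsto_atTop)
    · filter_upwards [eventually_ge_atTop 1] with n hn
      have hn1 : (1:ℝ) ≤ n := by exact_mod_cast hn
      have hdp : (0:ℝ) < (n:ℝ)^d := Real.rpow_pos_of_pos (by linarith) d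
      rw [le_div_iff₀ hdp]
      calc a * (n:ℝ)^d ≤ (⌈a * (n:ℝ)^d⌉₊ : ℝ) := Nat.le_ceil _
        _ = (ℓ n : ℝ) := by rw [hℓ n]
    · filter_upwards [eventually_ge_atTop 1] with n hn
      have hn1 : (1:ℝ) ≤ n := by exact_mod_cast hn
      have hdp : (0:ℝ) < (n:ℝ)^d := Real.rpow_pos_of_pos (by linarith) d
      rw [div_le_iff₀ hdp]
      have h1 : (ℓ n : ℝ) < a * (n:ℝ)^d + 1 := by
        rw [hℓ n]
        exact Nat.ceil_lt_add_one (by positivity)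
      have : (a + ((n:ℝ)^d)⁻¹) * (n:ℝ)^d = a * (n:ℝ)^d + 1 := by
        field_simp
      linarith
  -- log ℓ / log n → d
  have hlogl : Tendsto (fun n : ℕ => Real.log (ℓ n) / Real.log n) atTop (nhds d) := by
    have h := (hzero _ _ ((Real.continuousAt_log ha.ne').tendsto.comp hld)).add
      (tendsto_const_nhds (x := d))
    rw [zero_add] at h
    apply h.congr'
    filter_upwards [hbasic] with n ⟨hk, hn1, hlg, hlp⟩
    have hdp : (0:ℝ) < (n:ℝ)^d := Real.rpow_pos_of_pos (by linarith) d
    have : Real.log ((ℓ n : ℝ) / (n:ℝ)^d) = Real.log (ℓ n) - d * Real.log n := by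
      rw [Real.log_div hlp.ne' hdp.ne', Real.log_rpow (by linarith)]
    simp only [Function.comp, this]
    field_simp
    ring
  -- log k / log n → 1
  have hlogk : Tendsto (fun n : ℕ => Real.log (k n) / Real.log n) atTop (nhds 1) := by
    have h := (hzero _ _ ((Real.continuousAt_log hc.ne').tendsto.comp hkn)).add
      (tendsto_const_nhds (x := (1:ℝ)))
    rw [zero_add] at h
    apply h.congr'
    filter_upwards [hbasic] with n ⟨hk, hn1, hlg, hlp⟩
    have : Real.log (k n / n) = Real.log (k n) - Real.log n := by
      rw [Real.log_div hk.ne' (by positivity : (0:ℝ) < (n:ℝ)).ne']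
    simp only [Function.comp, this]
    field_simp
    ring
  -- log (1 + k P) / log n → 1
  have hD : Tendsto (fun n : ℕ => Real.log (1 + k n * P) / Real.log n) atTop (nhds 1) := by
    have hinner : Tendsto (fun n : ℕ => (1 + k n * P) / n) atTop (nhds (c * P)) := by
      have h1 : Tendsto (fun n : ℕ => 1 / (n:ℝ) + (k n / n) * P) atTop (nhds (0 + c * P)) :=
        (tendsto_const_nhds.div_atTop hncast).add (hkn.mul_const P)
      rw [zero_add] at h1
      apply h1.congr'
      filter_upwards [eventually_gt_atTop 0] with n hn
      have hn0 : (0:ℝ) < n := by exact_mod_cast hn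
      field_simp
    have hcP : 0 < c * P := mul_pos hc hP
    have h := (hzero _ _ ((Real.continuousAt_log hcP.ne').tendsto.comp hinner)).add
      (tendsto_const_nhds (x := (1:ℝ)))
    rw [zero_add] at h
    apply h.congr'
    filter_upwards [hbasic] with n ⟨hk, hn1, hlg, hlp⟩
    have hpos : (0:ℝ) < 1 + k n * P := by nlinarith
    have : Real.log ((1 + k n * P) / n) = Real.log (1 + k n * P) - Real.log n := by
      rw [Real.log_div hpos.ne' (by linarith : (0:ℝ) < (n:ℝ)).ne']
    simp only [Function.comp, this]
    field_simp
    ring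
  -- A part
  have hA : Tendsto (fun n : ℕ => (k n / n) *
      ((Real.log (ℓ n) - Real.log (k n)) / Real.log n)) atTop (nhds (c * (d - 1))) := by
    have := hkn.mul (hlogl.sub hlogk)
    apply this.congr
    intro n
    rw [sub_div]
  -- B part
  have hB : Tendsto (fun n : ℕ =>
      -(((ℓ n : ℝ) - k n) * Real.log (1 - k n / (ℓ n : ℝ))) / ((n:ℝ) * Real.log n))
      atTop (nhds 0) := by
    apply tendsto_of_tendsto_of_tendsto_of_le_of_le' (tendsto_const_nhds (x := (0:ℝ)))
      (hzero _ _ hkn)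
    · filter_upwards [hbasic] with n ⟨hk, hn1, hlg, hlp⟩
      have ht0 : (0:ℝ) ≤ 1 - k n / ℓ n := by
        have := (div_le_one hlp).mpr (hkℓ n); linarith
      have hlt : Real.log (1 - k n / ℓ n) ≤ 0 := by
        apply Real.log_nonpos ht0
        have : 0 < k n / ℓ n := div_pos hk hlp
        linarith
      have h1 : 0 ≤ (ℓ n : ℝ) - k n := by linarith [hkℓ n]
      have : 0 ≤ -(((ℓ n : ℝ) - k n) * Real.log (1 - k n / ℓ n)) := by nlinarith
      positivity
    · filter_upwards [hbasic] with n ⟨hk, hn1, hlg, hlp⟩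
      set t := 1 - k n / (ℓ n : ℝ) with htdef
      have ht0 : (0:ℝ) ≤ t := by
        have := (div_le_one hlp).mpr (hkℓ n); simp [htdef]; linarith
      have hlt : (ℓ n : ℝ) * t = (ℓ n : ℝ) - k n := by
        rw [htdef, mul_sub, mul_one, mul_div_cancel₀ _ hlp.ne']
      have key : -(((ℓ n : ℝ) - k n) * Real.log t) ≤ k n := by
        have h1 : -(((ℓ n : ℝ) - k n) * Real.log t) = (ℓ n : ℝ) * (-(t * Real.log t)) := by
          rw [← hlt]; ring
        have h2 := mul_le_mul_of_nonneg_left (neg_mul_log_le ht0) hlp.le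
        have h3 : (ℓ n : ℝ) * (1 - t) = k n := by
          rw [htdef, sub_sub_cancel, mul_div_cancel₀ _ hlp.ne']
        rw [h1]
        linarith
      have hnl : (0:ℝ) < (n:ℝ) * Real.log n := mul_pos (by linarith) hlg
      rw [div_div]
      exact (div_le_div_iff_of_pos_right hnl).mpr key
  -- assemble
  have hfinal := ((hA.add hB).div hD one_ne_zero).const_mul 2
  have heq : (2:ℝ) * ((c * (d - 1) + 0) / 1) = 2 * c * (d - 1) := by ring
  rw [heq] at hfinal
  apply hfinal.congr'
  filter_upwards [hbasic, hD.eventually (eventually_gt_nhds (by norm_num : (1:ℝ)/2 < 1))]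
    with n ⟨hk, hn1, hlg, hlp⟩ hDn
  have hlogDpos : 0 < Real.log (1 + k n * P) := by
    have := (div_pos_iff).mp (lt_trans (by norm_num) hDn)
    rcases this with ⟨h1, _⟩ | ⟨_, h2⟩
    · exact h1
    · linarith
  have hn0 : (0:ℝ) < n := by linarith
  have hlogq : Real.log (k n / (ℓ n : ℝ)) = Real.log (k n) - Real.log (ℓ n) :=
    Real.log_div hk.ne' hlp.ne'
  show 2 * ((k n / n * ((Real.log (ℓ n) - Real.log (k n)) / Real.log n) +
      -(((ℓ n : ℝ) - k n) * Real.log (1 - k n / (ℓ n : ℝ))) / ((n:ℝ) * Real.log n)) /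
      (Real.log (1 + k n * P) / Real.log n)) =
    2 * (ℓ n : ℝ) * H2 (k n / (ℓ n : ℝ)) / ((n:ℝ) * Real.log (1 + k n * P))
  rw [eq_div_iff (by positivity), H2, hlogq]
  field_simp [hlg.ne', hlogDpos.ne', hn0.ne', hlp.ne']
  ring
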